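/- arXiv:2601.10915 — 3 statements merged into one kernel-verified Lean document; each statement's English description precedes it below -/
import Mathlib

section
/- Let P be a probability measure on a measurable space X and let f : X → ℝ be measurable with E_P[f] finite and E_P[exp(−f)] finite. Define the Gibbs measure Q* by dQ*/dP = exp(−f)/E_P[exp(−f)]. Then for every probability measure Q on X with E_Q[exp(f)] < ∞, one has log E_Q[exp(f)] + D(P ‖ Q) ≥ E_P[f], and equality holds for Q = Q*; in particular, the infimum of log E_Q[exp(f)] + D(P ‖ Q) over probability measures Q equals E_P[f] and is attained at the Gibbs measure Q*. -/
open MeasureTheory ProbabilityTheory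
open scoped ENNReal NNReal

open scoped Classical in
/-- Kullback–Leibler divergence `D(P‖Q)`, valued in the extended reals:
it equals `∫ log (dP/dQ) dP` when `P ≪ Q` and this log-likelihood ratio is
integrable, and `+∞` otherwise. -/
noncomputable def klDiv {X : Type*} [MeasurableSpace X] (P Q : Measure X) : EReal :=
  if P ≪ Q ∧ Integrable (llr P Q) P then ((∫ x, llr P Q x ∂P : ℝ) : EReal) else ⊤

/-- The Gibbs measure `Q*` with density `dQ*/dP = exp (-f) / E_P[exp (-f)]`. -/
noncomputable def gibbsMeasure {X : Type*} [MeasurableSpace X] (P : Measure X) (f : X → ℝ) :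
    Measure X :=
  P.withDensity fun x => ENNReal.ofReal (Real.exp (-f x) / ∫ y, Real.exp (-f y) ∂P)

lemma my_integral_llr_nonneg {X : Type*} [MeasurableSpace X] {μ ν : Measure X}
    [IsProbabilityMeasure μ] [IsProbabilityMeasure ν] (hμν : μ ≪ ν)
    (h_int : Integrable (llr μ ν) μ) : 0 ≤ ∫ x, llr μ ν x ∂μ := by
  have hint' : Integrable (llr ν μ) μ := h_int.neg.congr (neg_llr hμν)
  have hint_rn : Integrable (fun x => (ν.rnDeriv μ x).toReal) μ :=
    Measure.integrable_toReal_rnDeriv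
  have h2 : ∫ x, llr ν μ x ∂μ ≤ ∫ x, ((ν.rnDeriv μ x).toReal - 1) ∂μ := by
    refine integral_mono_ae hint' (hint_rn.sub (integrable_const 1)) ?_
    filter_upwards [Measure.rnDeriv_pos' hμν, Measure.rnDeriv_lt_top ν μ] with x hx hlt
    exact Real.log_le_sub_one_of_pos (ENNReal.toReal_pos hx.ne' hlt.ne)
  have h3 : ∫ x, ((ν.rnDeriv μ x).toReal - 1) ∂μ ≤ 0 := by
    rw [integral_sub hint_rn (integrable_const 1)]
    have h4 : ∫ x, (ν.rnDeriv μ x).toReal ∂μ ≤ (ν Set.univ).toReal := by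
      have := Measure.setIntegral_toReal_rnDeriv_le (μ := ν) (ν := μ)
        (s := Set.univ) (measure_ne_top ν _)
      rwa [setIntegral_univ] at this
    simp only [integral_const, measure_univ, probReal_univ, ENNReal.toReal_one, smul_eq_mul, one_mul]
    simp only [measure_univ, ENNReal.toReal_one] at h4
    linarith
  have h5 : ∫ x, llr ν μ x ∂μ = - ∫ x, llr μ ν x ∂μ := by
    rw [← integral_congr_ae (neg_llr hμν)]
    simp [integral_neg]
  linarith

/-- **Gibbs variational principle.** For every probability measure `Q` with
`E_Q[exp f] < ∞` one has `log E_Q[exp f] + D(P‖Q) ≥ E_P[f]`, with equality at the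
Gibbs measure `Q*` with `dQ*/dP = exp (-f)/E_P[exp (-f)]`; in particular the infimum
of `log E_Q[exp f] + D(P‖Q)` over probability measures `Q` equals `E_P[f]` and is
attained at `Q*`. -/
theorem gibbs_variational_principle
    {X : Type*} [MeasurableSpace X] (P : Measure X) [IsProbabilityMeasure P]
    (f : X → ℝ) (hfmeas : Measurable f) (hfint : Integrable f P)
    (hexpint : Integrable (fun x => Real.exp (-f x)) P) :
    (∀ Q : Measure X, IsProbabilityMeasure Q →
        Integrable (fun x => Real.exp (f x)) Q →
        ((∫ x, f x ∂P : ℝ) : EReal) ≤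
          ((Real.log (∫ x, Real.exp (f x) ∂Q) : ℝ) : EReal) + klDiv P Q) ∧
      ((Real.log (∫ x, Real.exp (f x) ∂(gibbsMeasure P f)) : ℝ) : EReal) +
          klDiv P (gibbsMeasure P f) =
        ((∫ x, f x ∂P : ℝ) : EReal) := by
  constructor
  · intro Q hQ hQint
    by_cases h : P ≪ Q ∧ Integrable (llr P Q) P
    · rw [klDiv, if_pos h]
      obtain ⟨hPQ, h_int⟩ := h
      have hQne : NeZero Q := ⟨fun h => by simpa [h] using hQ.measure_univ⟩
      have hprob : IsProbabilityMeasure (Q.tilted f) := isProbabilityMeasure_tilted hQint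
      have hPQt : P ≪ Q.tilted f := hPQ.trans (absolutelyContinuous_tilted hQint)
      have h_int_t : Integrable (llr P (Q.tilted f)) P :=
        integrable_llr_tilted_right hPQ hfint h_int hQint
      have h0 := my_integral_llr_nonneg hPQt h_int_t
      rw [integral_llr_tilted_right hPQ hfint hQint h_int] at h0
      rw [← EReal.coe_add]
      exact_mod_cast by linarith
    · rw [klDiv, if_neg h]
      rw [EReal.add_top_of_ne_bot (by simp)]
      exact le_top
  · have hg : gibbsMeasure P f = P.tilted (fun x => -f x) := rfl
    have hPne : NeZero P := ⟨fun h => by simpa [h] using (measure_univ (μ := P))⟩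
    set Z := ∫ x, Real.exp (-f x) ∂P with hZdef
    have hZpos : 0 < Z := integral_exp_pos hexpint
    have hllr0 : llr P P =ᵐ[P] 0 := by
      filter_upwards [Measure.rnDeriv_self P] with x hx
      simp [llr, hx]
    have hllrPP : Integrable (llr P P) P := (integrable_const (0 : ℝ)).congr hllr0.symm
    have hac : P ≪ P.tilted (fun x => -f x) := absolutelyContinuous_tilted hexpint
    have hfneg : Integrable (fun x => -f x) P := hfint.neg
    have hint_t : Integrable (llr P (P.tilted (fun x => -f x))) P :=
      integrable_llr_tilted_right Measure.AbsolutelyContinuous.rfl hfneg hllrPP hexpint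
    have hI : ∫ x, llr P (P.tilted (fun x => -f x)) x ∂P = ∫ x, f x ∂P + Real.log Z := by
      rw [integral_llr_tilted_right Measure.AbsolutelyContinuous.rfl hfneg hexpint hllrPP]
      rw [integral_congr_ae hllr0]
      simp only [Pi.zero_apply, integral_zero, integral_neg]
      ring
    have hE : ∫ x, Real.exp (f x) ∂(P.tilted (fun x => -f x)) = 1 / Z := by
      have := integral_exp_tilted (μ := P) (fun x => -f x) f
      simp only [Pi.add_apply, neg_add_cancel, Real.exp_zero] at this
      rw [this]
      simp [hZdef]
    rw [hg, klDiv, if_pos ⟨hac, hint_t⟩, hI, hE, ← EReal.coe_add]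
    norm_cast
    rw [one_div, Real.log_inv]
    ring
end

section
/- For α > 0, the function f(v) = α²/(π·(α² + ‖v‖₂²)²) is a probability density on ℝ², and its differential entropy −∫_{ℝ²} f(v)·log f(v) dv equals log(π·e²·α²). -/
open MeasureTheory
open scoped Real

private lemma hu_top (a : ℝ) : Filter.Tendsto (fun y : ℝ => a + y ^ 2) Filter.atTop Filter.atTop :=
  Filter.tendsto_atTop_add_const_left _ a (Filter.tendsto_pow_atTop two_ne_zero)

private lemma lemA (a : ℝ) (ha : 0 < a) :
    IntegrableOn (fun y : ℝ => y / (a + y ^ 2) ^ 2) (Set.Ioi 0) ∧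
      (∫ y in Set.Ioi (0 : ℝ), y / (a + y ^ 2) ^ 2) = 1 / (2 * a) := by
  have hderiv : ∀ y ∈ Set.Ici (0 : ℝ),
      HasDerivAt (fun y : ℝ => -(2 * (a + y ^ 2))⁻¹) (y / (a + y ^ 2) ^ 2) y := by
    intro y _
    have hne : a + y ^ 2 ≠ 0 := by positivity
    have h1 : HasDerivAt (fun y : ℝ => a + y ^ 2) (2 * y) y := by
      simpa using (hasDerivAt_pow 2 y).const_add a
    have h2 := ((h1.const_mul 2).inv (by positivity)).neg
    refine h2.congr_deriv ?_
    field_simp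
  have hpos : ∀ y ∈ Set.Ioi (0 : ℝ), 0 ≤ y / (a + y ^ 2) ^ 2 := fun y hy => by
    have : (0 : ℝ) < y := hy
    positivity
  have htend : Filter.Tendsto (fun y : ℝ => -(2 * (a + y ^ 2))⁻¹) Filter.atTop (nhds 0) := by
    have : Filter.Tendsto (fun y : ℝ => 2 * (a + y ^ 2)) Filter.atTop Filter.atTop :=
      (hu_top a).const_mul_atTop two_pos
    simpa using (tendsto_inv_atTop_zero.comp this).neg
  refine ⟨integrableOn_Ioi_deriv_of_nonneg' hderiv hpos htend, ?_⟩
  rw [integral_Ioi_of_hasDerivAt_of_nonneg' hderiv hpos htend]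
  field_simp
  ring

private lemma lemB (a : ℝ) (ha : 0 < a) :
    IntegrableOn (fun y : ℝ => y * (Real.log (a + y ^ 2) - Real.log a) / (a + y ^ 2) ^ 2)
        (Set.Ioi 0) ∧
      (∫ y in Set.Ioi (0 : ℝ), y * (Real.log (a + y ^ 2) - Real.log a) / (a + y ^ 2) ^ 2)
        = 1 / (2 * a) := by
  have hderiv : ∀ y ∈ Set.Ici (0 : ℝ),
      HasDerivAt (fun y : ℝ => (Real.log a - Real.log (a + y ^ 2) - 1) / (2 * (a + y ^ 2)))
        (y * (Real.log (a + y ^ 2) - Real.log a) / (a + y ^ 2) ^ 2) y := by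
    intro y _
    have hupos : (0 : ℝ) < a + y ^ 2 := by positivity
    have h1 : HasDerivAt (fun y : ℝ => a + y ^ 2) (2 * y) y := by
      simpa using (hasDerivAt_pow 2 y).const_add a
    have hnum : HasDerivAt (fun y : ℝ => Real.log a - Real.log (a + y ^ 2) - 1)
        (-(2 * y / (a + y ^ 2))) y :=
      ((h1.log hupos.ne').const_sub (Real.log a)).sub_const 1
    have h2 := hnum.div (h1.const_mul 2) (by positivity)
    refine h2.congr_deriv ?_
    field_simp
    ring
  have hpos : ∀ y ∈ Set.Ioi (0 : ℝ),
      0 ≤ y * (Real.log (a + y ^ 2) - Real.log a) / (a + y ^ 2) ^ 2 := by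
    intro y hy
    have hy' : (0 : ℝ) < y := hy
    have hlog : Real.log a ≤ Real.log (a + y ^ 2) :=
      Real.log_le_log ha (by nlinarith)
    have : 0 ≤ y * (Real.log (a + y ^ 2) - Real.log a) :=
      mul_nonneg hy'.le (by linarith)
    positivity
  have htend : Filter.Tendsto
      (fun y : ℝ => (Real.log a - Real.log (a + y ^ 2) - 1) / (2 * (a + y ^ 2)))
      Filter.atTop (nhds 0) := by
    have hF : Filter.Tendsto (fun t : ℝ => (Real.log a - Real.log t - 1) / (2 * t))
        Filter.atTop (nhds 0) := by
      have l1 : Filter.Tendsto (fun t : ℝ => (Real.log a - 1) / (2 * t))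
          Filter.atTop (nhds 0) :=
        Filter.Tendsto.div_atTop tendsto_const_nhds
          ((Filter.tendsto_id).const_mul_atTop two_pos)
      have l2 : Filter.Tendsto (fun t : ℝ => Real.log t / (2 * t)) Filter.atTop (nhds 0) := by
        have := (Real.isLittleO_log_id_atTop.tendsto_div_nhds_zero).div_const (2 : ℝ)
        simpa [div_div, mul_comm] using this
      have := l1.sub l2
      rw [sub_zero] at this
      convert this using 2 with t
      rw [div_sub_div_same]
      ring_nf
    exact hF.comp (hu_top a)
  refine ⟨integrableOn_Ioi_deriv_of_nonneg' hderiv hpos htend, ?_⟩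
  rw [integral_Ioi_of_hasDerivAt_of_nonneg' hderiv hpos htend]
  norm_num
  field_simp

/-- For `α > 0`, the function `f(v) = α²/(π (α² + ‖v‖₂²)²)` is a probability density
on `ℝ²`, and its differential entropy `-∫ f log f` equals `log (π e² α²)`. -/
theorem density_and_entropy_ratio_complex_gaussians (α : ℝ) (hα : 0 < α) :
    (∀ v : EuclideanSpace ℝ (Fin 2), 0 ≤ α ^ 2 / (π * (α ^ 2 + ‖v‖ ^ 2) ^ 2)) ∧
      (∫ v : EuclideanSpace ℝ (Fin 2), α ^ 2 / (π * (α ^ 2 + ‖v‖ ^ 2) ^ 2)) = 1 ∧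
      -(∫ v : EuclideanSpace ℝ (Fin 2),
          (α ^ 2 / (π * (α ^ 2 + ‖v‖ ^ 2) ^ 2)) *
            Real.log (α ^ 2 / (π * (α ^ 2 + ‖v‖ ^ 2) ^ 2))) =
        Real.log (π * Real.exp 2 * α ^ 2) := by
  have ha : (0 : ℝ) < α ^ 2 := by positivity
  have hπ : (0 : ℝ) < π := Real.pi_pos
  have hvol : volume.real (Metric.ball (0 : EuclideanSpace ℝ (Fin 2)) 1) = π := by
    rw [measureReal_def, EuclideanSpace.volume_ball]
    have : Real.Gamma ((Fintype.card (Fin 2) : ℝ) / 2 + 1) = 1 := by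
      norm_num [Real.Gamma_two]
    rw [this]
    simp [Real.sq_sqrt, Real.pi_nonneg]
  refine ⟨fun v => by positivity, ?_, ?_⟩
  · rw [show (∫ v : EuclideanSpace ℝ (Fin 2), α ^ 2 / (π * (α ^ 2 + ‖v‖ ^ 2) ^ 2)) =
        ∫ v : EuclideanSpace ℝ (Fin 2),
          (fun r : ℝ => α ^ 2 / (π * (α ^ 2 + r ^ 2) ^ 2)) ‖v‖ from rfl,
      integral_fun_norm_addHaar volume (fun r : ℝ => α ^ 2 / (π * (α ^ 2 + r ^ 2) ^ 2))]
    have key : (fun y : ℝ => y ^ (Module.finrank ℝ (EuclideanSpace ℝ (Fin 2)) - 1) •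
        (α ^ 2 / (π * (α ^ 2 + y ^ 2) ^ 2))) =
        fun y : ℝ => (α ^ 2 / π) * (y / (α ^ 2 + y ^ 2) ^ 2) := by
      funext y
      have h : (0:ℝ) < α ^ 2 + y ^ 2 := by positivity
      rw [finrank_euclideanSpace_fin, smul_eq_mul]
      field_simp
      ring
    rw [key, integral_const_mul, (lemA (α ^ 2) ha).2, hvol, finrank_euclideanSpace_fin,
      nsmul_eq_mul, smul_eq_mul]
    field_simp
    ring
  · rw [show (∫ v : EuclideanSpace ℝ (Fin 2),
          (α ^ 2 / (π * (α ^ 2 + ‖v‖ ^ 2) ^ 2)) *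
            Real.log (α ^ 2 / (π * (α ^ 2 + ‖v‖ ^ 2) ^ 2))) =
        ∫ v : EuclideanSpace ℝ (Fin 2),
          (fun r : ℝ => (α ^ 2 / (π * (α ^ 2 + r ^ 2) ^ 2)) *
            Real.log (α ^ 2 / (π * (α ^ 2 + r ^ 2) ^ 2))) ‖v‖ from rfl,
      integral_fun_norm_addHaar volume
        (fun r : ℝ => (α ^ 2 / (π * (α ^ 2 + r ^ 2) ^ 2)) *
          Real.log (α ^ 2 / (π * (α ^ 2 + r ^ 2) ^ 2)))]
    set c₁ : ℝ := (α ^ 2 / π) * (-Real.log (α ^ 2) - Real.log π) with hc₁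
    set c₂ : ℝ := -(2 * α ^ 2 / π) with hc₂
    have key : (fun y : ℝ => y ^ (Module.finrank ℝ (EuclideanSpace ℝ (Fin 2)) - 1) •
        ((α ^ 2 / (π * (α ^ 2 + y ^ 2) ^ 2)) *
          Real.log (α ^ 2 / (π * (α ^ 2 + y ^ 2) ^ 2)))) =
        fun y : ℝ => c₁ * (y / (α ^ 2 + y ^ 2) ^ 2) +
          c₂ * (y * (Real.log (α ^ 2 + y ^ 2) - Real.log (α ^ 2)) / (α ^ 2 + y ^ 2) ^ 2) := by
      funext y
      have h : (0:ℝ) < α ^ 2 + y ^ 2 := by positivity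
      have hlog : Real.log (α ^ 2 / (π * (α ^ 2 + y ^ 2) ^ 2)) =
          Real.log (α ^ 2) - Real.log π - 2 * Real.log (α ^ 2 + y ^ 2) := by
        rw [Real.log_div ha.ne' (by positivity), Real.log_mul hπ.ne' (by positivity),
          Real.log_pow, Real.log_pow]
        push_cast
        ring
      rw [finrank_euclideanSpace_fin, smul_eq_mul, hlog, hc₁, hc₂]
      generalize Real.log (α ^ 2 + y ^ 2) = L2
      generalize Real.log (α ^ 2) = L1
      generalize Real.log π = L3
      field_simp
      ring
    have hint : (∫ y in Set.Ioi (0:ℝ),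
        (c₁ * (y / (α ^ 2 + y ^ 2) ^ 2) +
          c₂ * (y * (Real.log (α ^ 2 + y ^ 2) - Real.log (α ^ 2)) / (α ^ 2 + y ^ 2) ^ 2))) =
        c₁ * (1 / (2 * α ^ 2)) + c₂ * (1 / (2 * α ^ 2)) := by
      rw [integral_add ((lemA (α ^ 2) ha).1.const_mul c₁) ((lemB (α ^ 2) ha).1.const_mul c₂),
        integral_const_mul, integral_const_mul, (lemA (α ^ 2) ha).2, (lemB (α ^ 2) ha).2]
    rw [key, hint, hvol, finrank_euclideanSpace_fin, nsmul_eq_mul, smul_eq_mul, hc₁, hc₂,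
      Real.log_mul (by positivity) ha.ne', Real.log_mul hπ.ne' (Real.exp_ne_zero 2),
      Real.log_exp]
    generalize Real.log (α ^ 2) = L1
    generalize Real.log π = L3
    field_simp
    ring
end

section
/- Let λ > 0 and let Q be the probability measure on ℝ² with density q(v) = (λ²/(2π))·exp(−λ‖v‖₂). Let P be the probability measure on ℝ² with density f(v) = α²/(π·(α² + ‖v‖₂²)²) for some α > 0. Then the cross-entropy satisfies −∫_{ℝ²} f(v)·log q(v) dv = λ·π·α/2 − log(λ²/(2π)), and the Kullback–Leibler divergence satisfies D(P ‖ Q) = λ·π·α/2 − log(λ²/(2π)) − log(π·e²·α²). -/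
open MeasureTheory
open scoped ENNReal Real

section CKRLhelpers
open Set Filter Metric
open scoped Topology
lemma CKRL.vol_ball : (volume (Metric.ball (0 : EuclideanSpace ℝ (Fin 2)) 1)).toReal = π := by
  rw [EuclideanSpace.volume_ball]
  norm_num [Fintype.card_fin]
  exact Real.sq_sqrt Real.pi_nonneg
lemma CKRL.integral_radial (f : ℝ → ℝ) :
    (∫ v : EuclideanSpace ℝ (Fin 2), f ‖v‖) = 2 * π * ∫ r in Ioi (0:ℝ), r * f r := by
  rw [MeasureTheory.integral_fun_norm_addHaar (volume : Measure (EuclideanSpace ℝ (Fin 2))) f]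
  simp only [finrank_euclideanSpace_fin, Measure.real, CKRL.vol_ball, smul_eq_mul, nsmul_eq_mul,
    show (2-1 : ℕ) = 1 from rfl, pow_one]
  push_cast
  ring


lemma CKRL.integrable_radial (f : ℝ → ℝ)
    (h : IntegrableOn (fun r => r * f r) (Ioi (0:ℝ))) :
    Integrable (fun v : EuclideanSpace ℝ (Fin 2) => f ‖v‖) := by
  set E2 := EuclideanSpace ℝ (Fin 2)
  have hs : MeasurableSet ({(0 : E2)}ᶜ) := (measurableSet_singleton _).compl
  -- step A : from comap to volume
  have key : Integrable (fun v : E2 => f ‖v‖)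
        ((volume.comap (Subtype.val : ({(0:E2)}ᶜ : Set E2) → E2)).map Subtype.val) ↔
      Integrable ((fun v : E2 => f ‖v‖) ∘ Subtype.val)
        (volume.comap (Subtype.val : ({(0:E2)}ᶜ : Set E2) → E2)) :=
    (MeasurableEmbedding.subtype_coe hs).integrable_map_iff
  rw [map_comap_subtype_coe hs, restrict_compl_singleton] at key
  rw [key]
  -- step B : through the homeomorphism
  have keyB := (Measure.measurePreserving_homeomorphUnitSphereProd
      (volume : Measure E2)).integrable_comp_emb (Homeomorph.measurableEmbedding _)
    (g := fun p : sphere (0:E2) 1 × Ioi (0:ℝ) => f p.2.1)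
  rw [show ((fun p : sphere (0:E2) 1 × Ioi (0:ℝ) => f p.2.1) ∘ (homeomorphUnitSphereProd E2)) =
      ((fun v : E2 => f ‖v‖) ∘ Subtype.val) from by funext x; simp [homeomorphUnitSphereProd]] at keyB
  rw [keyB]
  -- step C : product with finite measure
  have keyD : Integrable (fun y : Ioi (0:ℝ) => f y.1)
      (Measure.volumeIoiPow (Module.finrank ℝ E2 - 1)) := by
    rw [show Module.finrank ℝ E2 - 1 = 1 by rw [finrank_euclideanSpace_fin]]
    unfold Measure.volumeIoiPow
    rw [integrable_withDensity_iff ((measurable_subtype_coe.pow_const 1).ennreal_ofReal)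
        (ae_of_all _ fun y => ENNReal.ofReal_lt_top)]
    have key2 : Integrable (fun r : ℝ => r * f r)
          ((volume.comap (Subtype.val : Ioi (0:ℝ) → ℝ)).map Subtype.val) ↔
        Integrable ((fun r : ℝ => r * f r) ∘ Subtype.val)
          (volume.comap (Subtype.val : Ioi (0:ℝ) → ℝ)) :=
      (MeasurableEmbedding.subtype_coe measurableSet_Ioi).integrable_map_iff
    rw [map_comap_subtype_coe measurableSet_Ioi] at key2
    have := key2.mp h
    refine this.congr ?_
    refine ae_of_all _ fun y => ?_
    simp only [Function.comp_apply, pow_one, ENNReal.toReal_ofReal y.2.le]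
    ring
  have h1 : Integrable (fun _ : sphere (0:E2) 1 => (1:ℝ)) ((volume : Measure E2).toSphere) :=
    integrable_const _
  have := h1.smul_prod keyD
  simpa using this


section oneD
variable {a : ℝ} (ha : 0 < a)

-- K1 : ∫ r/(a+r²)² = 1/(2a)
lemma CKRL.hasDeriv1 (x : ℝ) (ha : 0 < a) :
    HasDerivAt (fun r : ℝ => -(a + r^2)⁻¹/2) (x / (a + x^2)^2) x := by
  have hu : HasDerivAt (fun r : ℝ => a + r^2) (2*x) x := by
    simpa using ((hasDerivAt_pow 2 x).const_add a)
  have h2 := (hu.inv (by positivity)).neg.div_const 2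
  refine h2.congr_deriv ?_
  field_simp

lemma CKRL.tendsto_u (ha : 0 < a) : Tendsto (fun r : ℝ => a + r^2) atTop atTop :=
  tendsto_atTop_add_const_left atTop a (tendsto_pow_atTop two_ne_zero)

lemma CKRL.K1int (ha : 0 < a) : IntegrableOn (fun r : ℝ => r / (a + r^2)^2) (Ioi (0:ℝ)) := by
  refine integrableOn_Ioi_deriv_of_nonneg' (g := fun r : ℝ => -(a + r^2)⁻¹/2)
    (fun x _ => CKRL.hasDeriv1 x ha) (fun x hx => by have : 0 < x := hx; positivity) (l := 0) ?_
  simpa using ((CKRL.tendsto_u ha).inv_tendsto_atTop).neg.div_const 2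

lemma CKRL.K1val (ha : 0 < a) : ∫ r in Ioi (0:ℝ), r / (a + r^2)^2 = 1/(2*a) := by
  rw [integral_Ioi_of_hasDerivAt_of_nonneg' (g := fun r : ℝ => -(a + r^2)⁻¹/2)
    (fun x _ => CKRL.hasDeriv1 x ha) (fun x hx => by have : 0 < x := hx; positivity) (l := 0)
    (by simpa using ((CKRL.tendsto_u ha).inv_tendsto_atTop).neg.div_const 2)]
  field_simp
  ring

-- K2 : ∫ r²/(α²+r²)² = π/(4α)
lemma CKRL.hasDeriv2 {α : ℝ} (hα : 0 < α) (x : ℝ) :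
    HasDerivAt (fun r : ℝ => Real.arctan (r/α)/(2*α) - r/(2*(α^2 + r^2)))
      (x^2 / (α^2 + x^2)^2) x := by
  have h1 : HasDerivAt (fun r : ℝ => Real.arctan (r/α)) ((1/(1+(x/α)^2)) * (1/α)) x := by
    have := (Real.hasDerivAt_arctan (x/α)).comp x ((hasDerivAt_id x).div_const α)
    simpa [div_eq_mul_inv, Function.comp_def] using this
  have hu : HasDerivAt (fun r : ℝ => 2*(α^2 + r^2)) (2*(2*x)) x := by
    simpa using (((hasDerivAt_pow 2 x).const_add (α^2)).const_mul 2)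
  have h2 : HasDerivAt (fun r : ℝ => r/(2*(α^2 + r^2)))
      ((1*(2*(α^2 + x^2)) - x*(2*(2*x)))/(2*(α^2 + x^2))^2) x :=
    (hasDerivAt_id x).div hu (by positivity)
  have := (h1.div_const (2*α)).sub h2
  refine this.congr_deriv ?_
  have h3 : 1+(x/α)^2 = (α^2+x^2)/α^2 := by field_simp; try ring
  rw [h3]
  field_simp
  try ring

lemma CKRL.tendsto2 {α : ℝ} (hα : 0 < α) :
    Tendsto (fun r : ℝ => Real.arctan (r/α)/(2*α) - r/(2*(α^2 + r^2))) atTop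
      (𝓝 (π/2/(2*α))) := by
  have h1 : Tendsto (fun r : ℝ => Real.arctan (r/α)/(2*α)) atTop (𝓝 (π/2/(2*α))) := by
    exact (((tendsto_nhds_of_tendsto_nhdsWithin Real.tendsto_arctan_atTop).comp
      (Tendsto.atTop_div_const hα tendsto_id))).div_const (2*α)
  have h2 : Tendsto (fun r : ℝ => r/(2*(α^2 + r^2))) atTop (𝓝 0) := by
    have hd : Tendsto (fun r : ℝ => 2*α^2/r + 2*r) atTop atTop := by
      refine Tendsto.add_atTop (Tendsto.div_atTop tendsto_const_nhds tendsto_id) ?_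
      exact (tendsto_id.const_mul_atTop two_pos)
    refine (hd.inv_tendsto_atTop).congr' ?_
    filter_upwards [eventually_gt_atTop (0:ℝ)] with r hr
    have he : 2*α^2/r + 2*r = 2*(α^2+r^2)/r := by field_simp
    simp only [Pi.inv_apply]
    rw [he, inv_div]
  simpa using h1.sub h2

lemma CKRL.K2int {α : ℝ} (hα : 0 < α) :
    IntegrableOn (fun r : ℝ => r^2 / (α^2 + r^2)^2) (Ioi (0:ℝ)) :=
  integrableOn_Ioi_deriv_of_nonneg' (fun x _ => CKRL.hasDeriv2 hα x)
    (fun x hx => by positivity) (CKRL.tendsto2 hα)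

lemma CKRL.K2val {α : ℝ} (hα : 0 < α) :
    ∫ r in Ioi (0:ℝ), r^2 / (α^2 + r^2)^2 = π/(4*α) := by
  rw [integral_Ioi_of_hasDerivAt_of_nonneg' (fun x _ => CKRL.hasDeriv2 hα x)
    (fun x hx => by positivity) (CKRL.tendsto2 hα)]
  norm_num [Real.arctan_zero]
  ring

-- K3 : ∫ r * log((a+r²)/a)/(a+r²)² = 1/(2a)
lemma CKRL.hasDeriv3 (ha : 0 < a) (x : ℝ) :
    HasDerivAt (fun r : ℝ => -((Real.log ((a + r^2)/a) + 1)/(2*(a + r^2))))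
      (x * Real.log ((a + x^2)/a) / (a + x^2)^2) x := by
  have hu : HasDerivAt (fun r : ℝ => a + r^2) (2*x) x := by
    simpa using ((hasDerivAt_pow 2 x).const_add a)
  have hL : HasDerivAt (fun r : ℝ => Real.log ((a + r^2)/a)) ((2*x/a)/((a + x^2)/a)) x :=
    (hu.div_const a).log (by positivity)
  have hden : HasDerivAt (fun r : ℝ => 2*(a + r^2)) (2*(2*x)) x := by
    simpa using hu.const_mul 2
  have := ((hL.add_const 1).div hden (by positivity)).neg
  refine this.congr_deriv ?_
  have h1 : (0:ℝ) < a + x^2 := by positivity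
  field_simp
  ring

lemma CKRL.tendsto3 (ha : 0 < a) :
    Tendsto (fun r : ℝ => -((Real.log ((a + r^2)/a) + 1)/(2*(a + r^2)))) atTop (𝓝 0) := by
  have hφ : Tendsto (fun u : ℝ => (Real.log (u/a) + 1)/(2*u)) atTop (𝓝 0) := by
    have t1 : Tendsto (fun u : ℝ => Real.log u / u) atTop (𝓝 0) := by
      simpa using Real.tendsto_pow_log_div_mul_add_atTop 1 0 1 one_ne_zero
    have t2 : Tendsto (fun u : ℝ => u⁻¹) atTop (𝓝 (0:ℝ)) := tendsto_inv_atTop_zero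
    have := (t1.div_const 2).add ((t2.const_mul ((1 - Real.log a)/2)))
    rw [show (0:ℝ)/2 + (1 - Real.log a)/2 * 0 = 0 by ring] at this
    refine this.congr' ?_
    filter_upwards [eventually_gt_atTop (0:ℝ)] with u hu
    rw [Real.log_div hu.ne' ha.ne']
    field_simp
    ring
  have := (hφ.comp (CKRL.tendsto_u ha)).neg
  simpa using this

lemma CKRL.K3int (ha : 0 < a) :
    IntegrableOn (fun r : ℝ => r * Real.log ((a + r^2)/a) / (a + r^2)^2) (Ioi (0:ℝ)) := by
  refine integrableOn_Ioi_deriv_of_nonneg' (fun x _ => CKRL.hasDeriv3 ha x)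
    (fun x hx => ?_) (CKRL.tendsto3 ha)
  have hx' : 0 < x := hx
  have hlog : 0 ≤ Real.log ((a + x^2)/a) := by
    apply Real.log_nonneg
    rw [le_div_iff₀ ha]
    nlinarith [sq_nonneg x]
  exact div_nonneg (mul_nonneg hx'.le hlog) (by positivity)

lemma CKRL.K3val (ha : 0 < a) :
    ∫ r in Ioi (0:ℝ), r * Real.log ((a + r^2)/a) / (a + r^2)^2 = 1/(2*a) := by
  rw [integral_Ioi_of_hasDerivAt_of_nonneg' (fun x _ => CKRL.hasDeriv3 ha x)
    (fun x hx => ?_) (CKRL.tendsto3 ha)]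
  · rw [show a + 0^2 = a by ring, div_self ha.ne', Real.log_one]
    field_simp
    ring
  · have hx' : 0 < x := hx
    have hlog : 0 ≤ Real.log ((a + x^2)/a) := by
      apply Real.log_nonneg
      rw [le_div_iff₀ ha]
      nlinarith [sq_nonneg x]
    exact div_nonneg (mul_nonneg hx'.le hlog) (by positivity)

end oneD

end CKRLhelpers

open Set Filter in
/-- **Cross-entropy and KL divergence between the ratio density and the bivariate
isotropic Laplace density.**  With `q(v) = (λ²/(2π)) exp (-λ‖v‖₂)` and
`f(v) = α²/(π (α² + ‖v‖₂²)²)` on `ℝ²`, the cross-entropy is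
`-∫ f log q = λπα/2 - log (λ²/(2π))` and
`D(P‖Q) = λπα/2 - log (λ²/(2π)) - log (π e² α²)`. -/
theorem crossEntropy_klDiv_ratio_laplace (lam α : ℝ) (hlam : 0 < lam) (hα : 0 < α) :
    (-(∫ v : EuclideanSpace ℝ (Fin 2),
          (α ^ 2 / (π * (α ^ 2 + ‖v‖ ^ 2) ^ 2)) *
            Real.log (lam ^ 2 / (2 * π) * Real.exp (-lam * ‖v‖))) =
        lam * π * α / 2 - Real.log (lam ^ 2 / (2 * π))) ∧
      klDiv
          (volume.withDensity fun v : EuclideanSpace ℝ (Fin 2) =>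
            ENNReal.ofReal (α ^ 2 / (π * (α ^ 2 + ‖v‖ ^ 2) ^ 2)))
          (volume.withDensity fun v : EuclideanSpace ℝ (Fin 2) =>
            ENNReal.ofReal (lam ^ 2 / (2 * π) * Real.exp (-lam * ‖v‖))) =
        ((lam * π * α / 2 - Real.log (lam ^ 2 / (2 * π)) -
            Real.log (π * Real.exp 2 * α ^ 2) : ℝ) : EReal) := by

  have hπ : (0:ℝ) < π := Real.pi_pos
  have hc : (0:ℝ) < lam ^ 2 / (2 * π) := by positivity
  have ha : (0:ℝ) < α ^ 2 := by positivity
  constructor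
  · -- cross entropy
    rw [show (∫ v : EuclideanSpace ℝ (Fin 2), (α ^ 2 / (π * (α ^ 2 + ‖v‖ ^ 2) ^ 2)) * Real.log (lam ^ 2 / (2 * π) * Real.exp (-lam * ‖v‖)))
        = 2 * π * ∫ r in Set.Ioi (0:ℝ), r * ((α ^ 2 / (π * (α ^ 2 + r ^ 2) ^ 2)) * Real.log (lam ^ 2 / (2 * π) * Real.exp (-lam * r)))
        from CKRL.integral_radial (fun r : ℝ => (α ^ 2 / (π * (α ^ 2 + r ^ 2) ^ 2)) * Real.log (lam ^ 2 / (2 * π) * Real.exp (-lam * r)))]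
    have hpt : ∀ r : ℝ, r * ((α ^ 2 / (π * (α ^ 2 + r ^ 2) ^ 2)) * Real.log (lam ^ 2 / (2 * π) * Real.exp (-lam * r)))
        = (α ^ 2 / π * Real.log (lam ^ 2 / (2 * π))) * (r / (α ^ 2 + r ^ 2) ^ 2)
          + (-(lam * α ^ 2 / π)) * (r ^ 2 / (α ^ 2 + r ^ 2) ^ 2) := by
      intro r
      have h1 : (0:ℝ) < α ^ 2 + r ^ 2 := by positivity
      rw [Real.log_mul hc.ne' (Real.exp_pos _).ne', Real.log_exp]
      field_simp
    simp only [hpt]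
    rw [integral_add ((CKRL.K1int ha).const_mul _) ((CKRL.K2int hα).const_mul _),
      integral_const_mul, integral_const_mul, CKRL.K1val ha, CKRL.K2val hα]
    field_simp
    ring
  · -- KL divergence
    have hFc : Continuous (fun v : EuclideanSpace ℝ (Fin 2) => α ^ 2 / (π * (α ^ 2 + ‖v‖ ^ 2) ^ 2)) := by
      refine Continuous.div continuous_const (by continuity) (fun v => by positivity)
    have hqc : Continuous (fun v : EuclideanSpace ℝ (Fin 2) => lam ^ 2 / (2 * π) * Real.exp (-lam * ‖v‖)) := by
      continuity
    have hFpos : ∀ v : EuclideanSpace ℝ (Fin 2), 0 < α ^ 2 / (π * (α ^ 2 + ‖v‖ ^ 2) ^ 2) := fun v => by positivity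
    have hqpos : ∀ v : EuclideanSpace ℝ (Fin 2), 0 < lam ^ 2 / (2 * π) * Real.exp (-lam * ‖v‖) := fun v => by positivity
    have hFm : Measurable (fun v : EuclideanSpace ℝ (Fin 2) => ENNReal.ofReal (α ^ 2 / (π * (α ^ 2 + ‖v‖ ^ 2) ^ 2))) :=
      hFc.measurable.ennreal_ofReal
    have hqm : Measurable (fun v : EuclideanSpace ℝ (Fin 2) => ENNReal.ofReal (lam ^ 2 / (2 * π) * Real.exp (-lam * ‖v‖))) :=
      hqc.measurable.ennreal_ofReal
    have hPQeq : (volume.withDensity fun v : EuclideanSpace ℝ (Fin 2) => ENNReal.ofReal (α ^ 2 / (π * (α ^ 2 + ‖v‖ ^ 2) ^ 2)))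
        = (volume.withDensity fun v : EuclideanSpace ℝ (Fin 2) => ENNReal.ofReal (lam ^ 2 / (2 * π) * Real.exp (-lam * ‖v‖))).withDensity
            (fun v : EuclideanSpace ℝ (Fin 2) => ENNReal.ofReal (α ^ 2 / (π * (α ^ 2 + ‖v‖ ^ 2) ^ 2)) / ENNReal.ofReal (lam ^ 2 / (2 * π) * Real.exp (-lam * ‖v‖))) := by
      rw [← withDensity_mul _ hqm (g := fun v => ENNReal.ofReal (α ^ 2 / (π * (α ^ 2 + ‖v‖ ^ 2) ^ 2)) / ENNReal.ofReal (lam ^ 2 / (2 * π) * Real.exp (-lam * ‖v‖))) (hFm.div hqm)]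
      congr 1
      funext v
      exact (ENNReal.mul_div_cancel (ENNReal.ofReal_pos.mpr (hqpos v)).ne'
        ENNReal.ofReal_ne_top).symm
    have hPQ : (volume.withDensity fun v : EuclideanSpace ℝ (Fin 2) => ENNReal.ofReal (α ^ 2 / (π * (α ^ 2 + ‖v‖ ^ 2) ^ 2)))
        ≪ (volume.withDensity fun v : EuclideanSpace ℝ (Fin 2) => ENNReal.ofReal (lam ^ 2 / (2 * π) * Real.exp (-lam * ‖v‖))) := by
      rw [hPQeq]
      exact withDensity_absolutelyContinuous _ _
    have hrn : (volume.withDensity fun v : EuclideanSpace ℝ (Fin 2) => ENNReal.ofReal (α ^ 2 / (π * (α ^ 2 + ‖v‖ ^ 2) ^ 2))).rnDeriv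
          (volume.withDensity fun v : EuclideanSpace ℝ (Fin 2) => ENNReal.ofReal (lam ^ 2 / (2 * π) * Real.exp (-lam * ‖v‖)))
        =ᵐ[volume.withDensity fun v : EuclideanSpace ℝ (Fin 2) => ENNReal.ofReal (lam ^ 2 / (2 * π) * Real.exp (-lam * ‖v‖))]
          (fun v : EuclideanSpace ℝ (Fin 2) => ENNReal.ofReal (α ^ 2 / (π * (α ^ 2 + ‖v‖ ^ 2) ^ 2)) / ENNReal.ofReal (lam ^ 2 / (2 * π) * Real.exp (-lam * ‖v‖))) := by
      rw [hPQeq]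
      exact Measure.rnDeriv_withDensity _ (hFm.div hqm)
    have hllr : llr (volume.withDensity fun v : EuclideanSpace ℝ (Fin 2) => ENNReal.ofReal (α ^ 2 / (π * (α ^ 2 + ‖v‖ ^ 2) ^ 2)))
          (volume.withDensity fun v : EuclideanSpace ℝ (Fin 2) => ENNReal.ofReal (lam ^ 2 / (2 * π) * Real.exp (-lam * ‖v‖)))
        =ᵐ[volume.withDensity fun v : EuclideanSpace ℝ (Fin 2) => ENNReal.ofReal (α ^ 2 / (π * (α ^ 2 + ‖v‖ ^ 2) ^ 2))]
          (fun v : EuclideanSpace ℝ (Fin 2) => Real.log (α ^ 2 / (π * (α ^ 2 + ‖v‖ ^ 2) ^ 2)) - Real.log (lam ^ 2 / (2 * π) * Real.exp (-lam * ‖v‖))) := by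
      filter_upwards [hPQ.ae_eq hrn] with v hv
      rw [llr_def]
      simp only []
      rw [hv, ENNReal.toReal_div, ENNReal.toReal_ofReal (hFpos v).le,
        ENNReal.toReal_ofReal (hqpos v).le, Real.log_div (hFpos v).ne' (hqpos v).ne']
    have hpt2 : ∀ r : ℝ, r * ((α ^ 2 / (π * (α ^ 2 + r ^ 2) ^ 2)) * (Real.log (α ^ 2 / (π * (α ^ 2 + r ^ 2) ^ 2)) - Real.log (lam ^ 2 / (2 * π) * Real.exp (-lam * r))))
        = (α ^ 2 / π * (-Real.log (α ^ 2) - Real.log π - Real.log (lam ^ 2 / (2 * π)))) * (r / (α ^ 2 + r ^ 2) ^ 2)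
          + (α ^ 2 / π * lam) * (r ^ 2 / (α ^ 2 + r ^ 2) ^ 2)
          + (-(2 * α ^ 2 / π)) * (r * Real.log ((α ^ 2 + r ^ 2) / α ^ 2) / (α ^ 2 + r ^ 2) ^ 2) := by
      intro r
      have h1 : (0:ℝ) < α ^ 2 + r ^ 2 := by positivity
      rw [Real.log_mul hc.ne' (Real.exp_pos _).ne', Real.log_exp,
        Real.log_div ha.ne' (by positivity : (π * (α ^ 2 + r ^ 2) ^ 2) ≠ 0),
        Real.log_mul hπ.ne' (by positivity : ((α ^ 2 + r ^ 2) ^ 2) ≠ 0),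
        Real.log_pow (α ^ 2 + r ^ 2) 2, Real.log_div h1.ne' ha.ne']
      field_simp
      ring
    have hψint : IntegrableOn (fun r : ℝ => r * ((α ^ 2 / (π * (α ^ 2 + r ^ 2) ^ 2)) * (Real.log (α ^ 2 / (π * (α ^ 2 + r ^ 2) ^ 2)) - Real.log (lam ^ 2 / (2 * π) * Real.exp (-lam * r))))) (Set.Ioi (0:ℝ)) := by
      have : (fun r : ℝ => r * ((α ^ 2 / (π * (α ^ 2 + r ^ 2) ^ 2)) * (Real.log (α ^ 2 / (π * (α ^ 2 + r ^ 2) ^ 2)) - Real.log (lam ^ 2 / (2 * π) * Real.exp (-lam * r)))))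
          = fun r : ℝ => ((α ^ 2 / π * (-Real.log (α ^ 2) - Real.log π - Real.log (lam ^ 2 / (2 * π)))) * (r / (α ^ 2 + r ^ 2) ^ 2)
            + (α ^ 2 / π * lam) * (r ^ 2 / (α ^ 2 + r ^ 2) ^ 2))
            + (-(2 * α ^ 2 / π)) * (r * Real.log ((α ^ 2 + r ^ 2) / α ^ 2) / (α ^ 2 + r ^ 2) ^ 2) := by
        funext r
        rw [hpt2 r]
      rw [this]
      exact (((CKRL.K1int ha).const_mul _).add ((CKRL.K2int hα).const_mul _)).add
        ((CKRL.K3int ha).const_mul _)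
    have hInt : Integrable (llr (volume.withDensity fun v : EuclideanSpace ℝ (Fin 2) => ENNReal.ofReal (α ^ 2 / (π * (α ^ 2 + ‖v‖ ^ 2) ^ 2)))
          (volume.withDensity fun v : EuclideanSpace ℝ (Fin 2) => ENNReal.ofReal (lam ^ 2 / (2 * π) * Real.exp (-lam * ‖v‖))))
        (volume.withDensity fun v : EuclideanSpace ℝ (Fin 2) => ENNReal.ofReal (α ^ 2 / (π * (α ^ 2 + ‖v‖ ^ 2) ^ 2))) := by
      rw [integrable_congr hllr]
      rw [integrable_withDensity_iff hFm (ae_of_all _ fun v => ENNReal.ofReal_lt_top)]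
      have heq : (fun v : EuclideanSpace ℝ (Fin 2) => (Real.log (α ^ 2 / (π * (α ^ 2 + ‖v‖ ^ 2) ^ 2)) - Real.log (lam ^ 2 / (2 * π) * Real.exp (-lam * ‖v‖))) * (ENNReal.ofReal (α ^ 2 / (π * (α ^ 2 + ‖v‖ ^ 2) ^ 2))).toReal)
          = fun v : EuclideanSpace ℝ (Fin 2) => (α ^ 2 / (π * (α ^ 2 + ‖v‖ ^ 2) ^ 2)) * (Real.log (α ^ 2 / (π * (α ^ 2 + ‖v‖ ^ 2) ^ 2)) - Real.log (lam ^ 2 / (2 * π) * Real.exp (-lam * ‖v‖))) := by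
        funext v
        rw [ENNReal.toReal_ofReal (hFpos v).le]
        ring
      rw [heq]
      exact CKRL.integrable_radial (fun r : ℝ => (α ^ 2 / (π * (α ^ 2 + r ^ 2) ^ 2)) * (Real.log (α ^ 2 / (π * (α ^ 2 + r ^ 2) ^ 2)) - Real.log (lam ^ 2 / (2 * π) * Real.exp (-lam * r)))) hψint
    unfold klDiv
    rw [if_pos ⟨hPQ, hInt⟩]
    rw [EReal.coe_eq_coe_iff]
    rw [integral_congr_ae hllr]
    rw [show (volume.withDensity fun v : EuclideanSpace ℝ (Fin 2) => ENNReal.ofReal (α ^ 2 / (π * (α ^ 2 + ‖v‖ ^ 2) ^ 2)))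
        = volume.withDensity (fun v : EuclideanSpace ℝ (Fin 2) => ((Real.toNNReal (α ^ 2 / (π * (α ^ 2 + ‖v‖ ^ 2) ^ 2)) : ℝ≥0∞))) from rfl]
    rw [integral_withDensity_eq_integral_smul hFc.measurable.real_toNNReal]
    rw [show (∫ v : EuclideanSpace ℝ (Fin 2), Real.toNNReal (α ^ 2 / (π * (α ^ 2 + ‖v‖ ^ 2) ^ 2)) • (Real.log (α ^ 2 / (π * (α ^ 2 + ‖v‖ ^ 2) ^ 2)) - Real.log (lam ^ 2 / (2 * π) * Real.exp (-lam * ‖v‖))))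
        = ∫ v : EuclideanSpace ℝ (Fin 2), (α ^ 2 / (π * (α ^ 2 + ‖v‖ ^ 2) ^ 2)) * (Real.log (α ^ 2 / (π * (α ^ 2 + ‖v‖ ^ 2) ^ 2)) - Real.log (lam ^ 2 / (2 * π) * Real.exp (-lam * ‖v‖))) from
      integral_congr_ae (Filter.Eventually.of_forall fun v => by
        simp [NNReal.smul_def, smul_eq_mul, Real.coe_toNNReal _ (hFpos v).le])]
    rw [show (∫ v : EuclideanSpace ℝ (Fin 2), (α ^ 2 / (π * (α ^ 2 + ‖v‖ ^ 2) ^ 2)) * (Real.log (α ^ 2 / (π * (α ^ 2 + ‖v‖ ^ 2) ^ 2)) - Real.log (lam ^ 2 / (2 * π) * Real.exp (-lam * ‖v‖))))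
        = 2 * π * ∫ r in Set.Ioi (0:ℝ), r * ((α ^ 2 / (π * (α ^ 2 + r ^ 2) ^ 2)) * (Real.log (α ^ 2 / (π * (α ^ 2 + r ^ 2) ^ 2)) - Real.log (lam ^ 2 / (2 * π) * Real.exp (-lam * r))))
        from CKRL.integral_radial (fun r : ℝ => (α ^ 2 / (π * (α ^ 2 + r ^ 2) ^ 2)) * (Real.log (α ^ 2 / (π * (α ^ 2 + r ^ 2) ^ 2)) - Real.log (lam ^ 2 / (2 * π) * Real.exp (-lam * r))))]
    simp only [hpt2]
    have i1 : IntegrableOn (fun r : ℝ => (α ^ 2 / π * (-Real.log (α ^ 2) - Real.log π - Real.log (lam ^ 2 / (2 * π)))) * (r / (α ^ 2 + r ^ 2) ^ 2)) (Set.Ioi (0:ℝ)) :=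
      (CKRL.K1int ha).const_mul _
    have i2 : IntegrableOn (fun r : ℝ => (α ^ 2 / π * lam) * (r ^ 2 / (α ^ 2 + r ^ 2) ^ 2)) (Set.Ioi (0:ℝ)) :=
      (CKRL.K2int hα).const_mul _
    have i3 : IntegrableOn (fun r : ℝ => (-(2 * α ^ 2 / π)) * (r * Real.log ((α ^ 2 + r ^ 2) / α ^ 2) / (α ^ 2 + r ^ 2) ^ 2)) (Set.Ioi (0:ℝ)) :=
      (CKRL.K3int ha).const_mul _
    have i12 : IntegrableOn (fun r : ℝ => (α ^ 2 / π * (-Real.log (α ^ 2) - Real.log π - Real.log (lam ^ 2 / (2 * π)))) * (r / (α ^ 2 + r ^ 2) ^ 2) + (α ^ 2 / π * lam) * (r ^ 2 / (α ^ 2 + r ^ 2) ^ 2)) (Set.Ioi (0:ℝ)) :=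
      i1.add i2
    rw [integral_add i12 i3, integral_add i1 i2,
      integral_const_mul, integral_const_mul, integral_const_mul,
      CKRL.K1val ha, CKRL.K2val hα, CKRL.K3val ha]
    rw [Real.log_mul (by positivity : π * Real.exp 2 ≠ 0) ha.ne',
      Real.log_mul hπ.ne' (Real.exp_pos _).ne', Real.log_exp]
    field_simp
    ring
end
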